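/- Let p be a prime, n ≥ 1, and let G be a finite group of conjugate type (1, p^n). Then for every g ∈ K(G) with g ≠ 1, Pr_g(G) = |TZ_g| / ([G : Z(G)] · p^n), and Pr_1(G) = (1/[G : Z(G)]) · (1 + ([G : Z(G)] − 1)/p^n). -/

import Mathlib

open scoped Classical

namespace Paper

/-- The commutator `[x,y] = x⁻¹y⁻¹xy`. -/
def comm {G : Type*} [Group G] (x y : G) : G := x⁻¹ * y⁻¹ * x * y

/-- `K(G)`, the set of commutators in `G`. -/
def KG (G : Type*) [Group G] : Set G := {g : G | ∃ x y : G, comm x y = g}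

/-- The fiber of `g` under the commutator word map. -/
def fiber {G : Type*} [Group G] (g : G) : Set (G × G) := {q : G × G | comm q.1 q.2 = g}

/-- `Pr_g(G) = |fiber(g)| / |G|²`. -/
noncomputable def Pr (G : Type*) [Group G] (g : G) : ℚ :=
  (Nat.card (fiber g) : ℚ) / ((Nat.card G : ℚ)) ^ 2

/-- `P(G) = {Pr_g(G) : g ∈ K(G), g ≠ 1}`. -/
noncomputable def PSet (G : Type*) [Group G] : Set ℚ :=
  {q : ℚ | ∃ g ∈ KG G, g ≠ 1 ∧ Pr G g = q}

/-- The conjugacy class `g^G` of `g` in `G`. -/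
def conjClass {G : Type*} [Group G] (g : G) : Set G := {h : G | ∃ x : G, x⁻¹ * g * x = h}

/-- `G` is of conjugate type `(1, m)`: every noncentral element has conjugacy
class of size exactly `m`. -/
def IsConjugateType1 (G : Type*) [Group G] (m : ℕ) : Prop :=
  ∀ g : G, g ∉ Subgroup.center G → Nat.card (conjClass g) = m

/-- `TZ_g = {xZ(G) ∈ G/Z(G) : g ∈ [x,G]}`. -/
def TZ (G : Type*) [Group G] (g : G) : Set (G ⧸ Subgroup.center G) :=
  {xz : G ⧸ Subgroup.center G |
    ∃ x : G, (QuotientGroup.mk x : G ⧸ Subgroup.center G) = xz ∧ ∃ h : G, comm x h = g}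

section Aux

variable {G : Type*} [Group G]

lemma comm_eq_one_iff (x y : G) : comm x y = 1 ↔ x * y = y * x := by
  constructor
  · intro h
    calc x * y = y * x * (x⁻¹ * y⁻¹ * x * y) := by group
      _ = y * x * 1 := by rw [← h]; rfl
      _ = y * x := mul_one _
  · intro h
    show x⁻¹ * y⁻¹ * x * y = 1
    calc x⁻¹ * y⁻¹ * x * y = x⁻¹ * y⁻¹ * (x * y) := by group
      _ = x⁻¹ * y⁻¹ * (y * x) := by rw [h]
      _ = 1 := by group

noncomputable def equivCent (x : G) :
    {y : G // comm x y = 1} ≃ (Subgroup.centralizer ({x} : Set G)) where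
  toFun y := ⟨y.1, by
    rw [Subgroup.mem_centralizer_iff]
    intro g hg
    rw [Set.mem_singleton_iff] at hg
    rw [hg]
    exact (comm_eq_one_iff x y.1).1 y.2⟩
  invFun c := ⟨c.1, (comm_eq_one_iff x c.1).2
    (Subgroup.mem_centralizer_iff.mp c.2 x (Set.mem_singleton x))⟩
  left_inv y := rfl
  right_inv c := rfl

lemma conjClass_eq_orbit (x : G) : conjClass x = MulAction.orbit (ConjAct G) x := by
  ext h
  constructor
  · rintro ⟨z, rfl⟩
    refine ⟨ConjAct.toConjAct z⁻¹, ?_⟩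
    simp [ConjAct.smul_def, mul_assoc]
  · rintro ⟨c, rfl⟩
    refine ⟨(ConjAct.ofConjAct c)⁻¹, ?_⟩
    simp [ConjAct.smul_def, mul_assoc]

lemma card_conj_mul_card_comm_one (x : G) [Finite G] :
    Nat.card (conjClass x) * Nat.card {y : G // comm x y = 1} = Nat.card G := by
  have h1 : Nat.card (conjClass x) = Nat.card (MulAction.orbit (ConjAct G) x) := by
    rw [conjClass_eq_orbit]
  have h2 : Nat.card {y : G // comm x y = 1} =
      Nat.card (MulAction.stabilizer (ConjAct G) x) := by
    rw [Nat.card_congr (equivCent x), Subgroup.nat_card_centralizer_nat_card_stabilizer]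
  rw [h1, h2, ← Nat.card_prod,
    Nat.card_congr (MulAction.orbitProdStabilizerEquivGroup (ConjAct G) x)]
  rfl

lemma comm_key {x h g : G} (hh : comm x h = g) :
    ∀ y : G, comm x y = g → y⁻¹ * x * y = h⁻¹ * x * h := by
  intro y hy
  have e : x * comm x y = x * comm x h := by rw [hy, hh]
  calc y⁻¹ * x * y = x * comm x y := by simp only [comm]; group
    _ = x * comm x h := e
    _ = h⁻¹ * x * h := by simp only [comm]; group

noncomputable def equivTranslate (x h g : G) (hh : comm x h = g) :
    {y : G // comm x y = g} ≃ {y : G // comm x y = 1} where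
  toFun y := ⟨y.1 * h⁻¹, by
    have e : comm x (y.1 * h⁻¹) = x⁻¹ * (h * (y.1⁻¹ * x * y.1) * h⁻¹) := by
      simp only [comm]; group
    rw [e, comm_key hh y.1 y.2]; group⟩
  invFun c := ⟨c.1 * h, by
    have e : x * c.1 = c.1 * x := (comm_eq_one_iff x c.1).1 c.2
    have e2 : comm x (c.1 * h) = x⁻¹ * h⁻¹ * (c.1⁻¹ * (x * c.1)) * h := by
      simp only [comm]; group
    rw [e2, e, ← hh]; simp only [comm]; group⟩
  left_inv y := by ext; simp
  right_inv c := by ext; simp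

lemma comm_mul_center (x h : G) {z : G} (hz : z ∈ Subgroup.center G) :
    comm (x * z) h = comm x h := by
  have hz' := Subgroup.mem_center_iff.mp hz
  calc comm (x * z) h = z⁻¹ * ((x⁻¹ * h⁻¹ * x) * z) * h := by simp only [comm]; group
    _ = z⁻¹ * (z * (x⁻¹ * h⁻¹ * x)) * h := by rw [hz' (x⁻¹ * h⁻¹ * x)]
    _ = comm x h := by simp only [comm]; group

lemma comm_center_eq_one (x h : G) (hx : x ∈ Subgroup.center G) : comm x h = 1 :=
  (comm_eq_one_iff x h).2 ((Subgroup.mem_center_iff.mp hx h).symm)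

def fiberEquivSigma (g : G) : fiber g ≃ Σ x : G, {y : G // comm x y = g} where
  toFun q := ⟨q.1.1, q.1.2, q.2⟩
  invFun s := ⟨(s.1, s.2.1), s.2.2⟩
  left_inv _ := rfl
  right_inv _ := rfl

lemma card_fiber_eq_sum (g : G) [Fintype G] :
    Nat.card (fiber g) = ∑ x : G, Nat.card {y : G // comm x y = g} := by
  rw [Nat.card_congr (fiberEquivSigma g), Nat.card_eq_fintype_card, Fintype.card_sigma]
  simp [Nat.card_eq_fintype_card]

lemma witness_set_eq (g : G) :
    {x : G | ∃ h : G, comm x h = g} =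
      (QuotientGroup.mk : G → G ⧸ Subgroup.center G) ⁻¹' (TZ G g) := by
  ext x
  constructor
  · rintro ⟨h, hh⟩
    exact ⟨x, rfl, h, hh⟩
  · rintro ⟨x', hx', h, hh⟩
    have hz : x'⁻¹ * x ∈ Subgroup.center G := (QuotientGroup.eq (s := Subgroup.center G)).1 hx'
    refine ⟨h, ?_⟩
    have e : x = x' * (x'⁻¹ * x) := by group
    rw [e, comm_mul_center x' h hz, hh]

lemma card_witness (g : G) [Finite G] :
    Nat.card {x : G // ∃ h : G, comm x h = g} =
      Nat.card (Subgroup.center G) * Nat.card (TZ G g) := by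
  calc Nat.card {x : G // ∃ h : G, comm x h = g}
      = Nat.card ((QuotientGroup.mk : G → G ⧸ Subgroup.center G) ⁻¹' (TZ G g)) := by
        rw [← witness_set_eq g]; rfl
    _ = Nat.card ((Subgroup.center G) × (TZ G g)) :=
        Nat.card_congr (QuotientGroup.preimageMkEquivSubgroupProdSet _ _)
    _ = Nat.card (Subgroup.center G) * Nat.card (TZ G g) := Nat.card_prod _ _

end Aux

/-- formulas for `Pr_g(G)` in a finite group of conjugate type
`(1, p^n)`. -/
theorem stmt6 (p n : ℕ) (hp : p.Prime) (hn : 1 ≤ n)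
    (G : Type*) [Group G] [Finite G] (hct : IsConjugateType1 G (p ^ n)) :
    (∀ g : G, g ∈ KG G → g ≠ 1 →
      Pr G g = (Nat.card (TZ G g) : ℚ) /
        (((Subgroup.center G).index : ℚ) * (p : ℚ) ^ n)) ∧
    Pr G 1 = (1 / ((Subgroup.center G).index : ℚ)) *
      (1 + (((Subgroup.center G).index : ℚ) - 1) / (p : ℚ) ^ n) := by
  haveI := Fintype.ofFinite G
  have hZdef : True := trivial
  have hpn : 0 < p ^ n := pow_pos hp.pos n
  have hN : 0 < Nat.card G := Nat.card_pos
  have hzk : Nat.card (Subgroup.center G) * (Subgroup.center G).index = Nat.card G := Subgroup.card_mul_index (Subgroup.center G)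
  have hk0 : (Subgroup.center G).index ≠ 0 := by
    intro h
    rw [h, mul_zero] at hzk
    omega
  have hq1 : (Nat.card (Subgroup.center G) : ℚ) * ((Subgroup.center G).index : ℚ) = (Nat.card G : ℚ) := by exact_mod_cast hzk
  have hkq0 : (((Subgroup.center G).index : ℚ)) ≠ 0 := by exact_mod_cast hk0
  have hpq0 : ((p : ℚ)) ^ n ≠ 0 := by
    have : (p : ℚ) ≠ 0 := by exact_mod_cast hp.pos.ne'
    exact pow_ne_zero n this
  have hNq0 : ((Nat.card G : ℚ)) ≠ 0 := by exact_mod_cast hN.ne'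
  by_cases hab : ∀ x : G, x ∈ Subgroup.center G
  · -- abelian case
    have hcomm1 : ∀ x y : G, comm x y = 1 := fun x y => comm_center_eq_one x y (hab x)
    constructor
    · intro g hg hg1
      obtain ⟨x, y, hxy⟩ := hg
      exact absurd (hxy ▸ hcomm1 x y : g = 1) hg1
    · have hfib : fiber (1 : G) = Set.univ := by
        ext q
        simp [fiber, hcomm1]
      have hZtop : Subgroup.center G = ⊤ := by
        rw [Subgroup.eq_top_iff']
        exact hab
      have hk1 : (Subgroup.center G).index = 1 := by rw [hZtop]; exact Subgroup.index_top
      have hcard : Nat.card (fiber (1 : G)) = Nat.card G * Nat.card G := by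
        rw [hfib, Nat.card_congr (Equiv.Set.univ _), Nat.card_prod]
      rw [Pr, hcard, hk1]
      push_cast
      field_simp
      ring
  · push_neg at hab
    obtain ⟨x0, hx0⟩ := hab
    set c := Nat.card {y : G // comm x0 y = 1} with hcdef
    have hcN : p ^ n * c = Nat.card G := by
      have e := card_conj_mul_card_comm_one x0
      rwa [hct x0 hx0] at e
    have hcx : ∀ x : G, x ∉ Subgroup.center G → Nat.card {y : G // comm x y = 1} = c := by
      intro x hx
      have e1 := card_conj_mul_card_comm_one x
      rw [hct x hx] at e1
      exact Nat.eq_of_mul_eq_mul_left hpn (e1.trans hcN.symm)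
    have hq2 : ((p : ℚ)) ^ n * (c : ℚ) = (Nat.card G : ℚ) := by exact_mod_cast hcN
    constructor
    · -- g ≠ 1 case
      intro g hgK hg1
      have hxcard : ∀ x : G, Nat.card {y : G // comm x y = g} =
          if ∃ h : G, comm x h = g then c else 0 := by
        intro x
        by_cases hw : ∃ h : G, comm x h = g
        · rw [if_pos hw]
          obtain ⟨h, hh⟩ := hw
          have hxnc : x ∉ Subgroup.center G := by
            intro hxz
            exact hg1 (hh ▸ comm_center_eq_one x h hxz : g = 1)
          rw [Nat.card_congr (equivTranslate x h g hh)]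
          exact hcx x hxnc
        · rw [if_neg hw]
          have : IsEmpty {y : G // comm x y = g} := ⟨fun y => hw ⟨y.1, y.2⟩⟩
          exact Nat.card_of_isEmpty
      have hsum : Nat.card (fiber g) = Nat.card (Subgroup.center G) * Nat.card (TZ G g) * c := by
        rw [card_fiber_eq_sum g]
        calc ∑ x : G, Nat.card {y : G // comm x y = g}
            = ∑ x : G, (if ∃ h : G, comm x h = g then c else 0) :=
              Finset.sum_congr rfl fun x _ => hxcard x
          _ = ∑ x ∈ Finset.univ.filter (fun x : G => ∃ h : G, comm x h = g), c :=
              (Finset.sum_filter _ _).symm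
          _ = (Finset.univ.filter (fun x : G => ∃ h : G, comm x h = g)).card * c := by
              rw [Finset.sum_const, smul_eq_mul]
          _ = Nat.card {x : G // ∃ h : G, comm x h = g} * c := by
              rw [Nat.card_eq_fintype_card, Fintype.card_subtype]
          _ = Nat.card (Subgroup.center G) * Nat.card (TZ G g) * c := by rw [card_witness g]
      rw [Pr, hsum]
      push_cast
      rw [div_eq_div_iff (by positivity) (by positivity)]
      ring_nf
      linear_combination ((Nat.card (TZ G g) : ℚ) * (c : ℚ) * (p : ℚ) ^ n) * hq1 +
        ((Nat.card (TZ G g) : ℚ) * (Nat.card G : ℚ)) * hq2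
    · -- g = 1 case
      have hxcard : ∀ x : G, Nat.card {y : G // comm x y = 1} =
          if x ∈ Subgroup.center G then Nat.card G else c := by
        intro x
        by_cases hxz : x ∈ Subgroup.center G
        · rw [if_pos hxz]
          rw [Nat.card_congr (Equiv.subtypeUnivEquiv fun y => comm_center_eq_one x y hxz)]
        · rw [if_neg hxz]
          exact hcx x hxz
      set a := (Finset.univ.filter (fun x : G => x ∈ Subgroup.center G)).card with hadef
      set b := (Finset.univ.filter (fun x : G => ¬ x ∈ Subgroup.center G)).card with hbdef
      have hab' : a + b = Nat.card G := by
        rw [hadef, hbdef, Finset.card_filter_add_card_filter_not,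
          Finset.card_univ, Nat.card_eq_fintype_card]
      have haz : a = Nat.card (Subgroup.center G) := by
        rw [Nat.card_eq_fintype_card, Fintype.card_subtype]
      have hsum : Nat.card (fiber (1 : G)) = a * Nat.card G + b * c := by
        rw [card_fiber_eq_sum (1 : G)]
        calc ∑ x : G, Nat.card {y : G // comm x y = 1}
            = ∑ x : G, (if x ∈ Subgroup.center G then Nat.card G else c) :=
              Finset.sum_congr rfl fun x _ => hxcard x
          _ = a * Nat.card G + b * c := by
              rw [Finset.sum_ite, Finset.sum_const, Finset.sum_const, smul_eq_mul, smul_eq_mul]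
      rw [Pr, hsum]
      have hq3 : (a : ℚ) + (b : ℚ) = (Nat.card G : ℚ) := by exact_mod_cast hab'
      have hq4 : (a : ℚ) = (Nat.card (Subgroup.center G) : ℚ) := by exact_mod_cast haz
      push_cast
      rw [div_eq_iff (by positivity)]
      field_simp
      simp only [Nat.card_eq_fintype_card] at hq1 hq2 hq3 hq4 ⊢
      linear_combination ((Fintype.card G : ℚ) * (p:ℚ)^n * ((Subgroup.center G).index : ℚ)
          - ((Subgroup.center G).index : ℚ) * (Fintype.card G : ℚ)) * hq4
        + ((Fintype.card G : ℚ) * (p:ℚ)^n - (Fintype.card G : ℚ)) * hq1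
        + (((Subgroup.center G).index : ℚ) * (b:ℚ)) * hq2
        + (((Subgroup.center G).index : ℚ) * (Fintype.card G : ℚ)) * hq3

end Paper
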